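/- arXiv:1410.7806 — 5 statements merged into one kernel-verified Lean document; each statement's English description precedes it below -/
import Mathlib

section
/- Let n ≥ 2, let B : ℤ/n → ℝ, and let Y⁰, Y¹, …, Y^{n-1} : ℤ/n → ℝ be rows generated by the lower pentagram map T₁ starting from the axis-aligned pair (∞, B); concretely, assume: Y⁰ = B; for every i ∈ ℤ/n, Y¹(i) is the unique real number z satisfying (B(i−1) − z)·(B(i) − B(i+1)) = (B(i) − B(i−1))·(z − B(i)) (the degenerate six-point cross ratio condition [∞, B(i), B(i−1), z, B(i), B(i+1)] = −1); and for every k with 1 ≤ k ≤ n−2 and every i ∈ ℤ/n, Y^{k+1}(i) is the unique real number z satisfying (Y^{k-1}(i) − Y^k(i))·(Y^k(i−1) − z)·(Y^k(i) − Y^k(i+1)) = −(Y^k(i) − Y^k(i−1))·(z − Y^k(i))·(Y^k(i+1) − Y^{k-1}(i)) (the six-point cross ratio condition [Y^{k-1}(i), Y^k(i), Y^k(i−1), z, Y^k(i), Y^k(i+1)] = −1). Then the last row is constant and equal to the center of mass of B: for every i ∈ ℤ/n, Y^{n-1}(i) = (1/n)·Σ_{j ∈ ℤ/n} B(j). -/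
open Finset
namespace LPC
variable {n : ℕ}

/-- Weighted window sum: `∑ r ≤ k, α r * B (t + r)`. -/
def Fw (B : ZMod n → ℝ) (α : ℕ → ℝ) (k : ℕ) (t : ZMod n) : ℝ :=
  ∑ r ∈ Finset.range (k + 1), α r * B (t + (r : ZMod n))

/-- `α` is a normalized weight vector of order `k` fitting value `v` on windows
starting at `s, s+1, …, s+k`. -/
def IsFit (B : ZMod n → ℝ) (k : ℕ) (s : ZMod n) (v : ℝ) (α : ℕ → ℝ) : Prop :=
  (∀ r, k < r → α r = 0) ∧ (∑ r ∈ Finset.range (k + 1), α r = 1) ∧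
    ∀ j : ℕ, j ≤ k → Fw B α k (s + (j : ZMod n)) = v

/-- Master pairing lemma: pairing a fully-known fit `β` against a fit `α` known at all
shifts except `q0` yields a scalar identity with a single boundary term. -/
lemma pairing (B : ZMod n → ℝ) (k m q0 c : ℕ) (s : ZMod n) (v w : ℝ) (α β : ℕ → ℝ)
    (hq0 : q0 ≤ m)
    (hα1 : ∑ r ∈ Finset.range (k + 1), α r = 1)
    (hβ1 : ∑ q ∈ Finset.range (m + 1), β q = 1)
    (hα : ∀ q ≤ m, q ≠ q0 → Fw B α k (s + ((q + c : ℕ) : ZMod n)) = v)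
    (hβ : ∀ r ≤ k, Fw B β m (s + ((r + c : ℕ) : ZMod n)) = w) :
    w = v + β q0 * (Fw B α k (s + ((q0 + c : ℕ) : ZMod n)) - v) := by
  have key : ∀ q r : ℕ, (s + ((q + c : ℕ) : ZMod n)) + (r : ZMod n)
      = (s + ((r + c : ℕ) : ZMod n)) + (q : ZMod n) := by
    intro q r; push_cast; ring
  have hD : ∑ q ∈ Finset.range (m + 1), β q * Fw B α k (s + ((q + c : ℕ) : ZMod n)) = w := by
    calc ∑ q ∈ Finset.range (m + 1), β q * Fw B α k (s + ((q + c : ℕ) : ZMod n))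
        = ∑ q ∈ Finset.range (m + 1), ∑ r ∈ Finset.range (k + 1),
            β q * (α r * B ((s + ((q + c : ℕ) : ZMod n)) + (r : ZMod n))) := by
          refine Finset.sum_congr rfl fun q _ => ?_
          rw [Fw, Finset.mul_sum]
      _ = ∑ r ∈ Finset.range (k + 1), ∑ q ∈ Finset.range (m + 1),
            α r * (β q * B ((s + ((r + c : ℕ) : ZMod n)) + (q : ZMod n))) := by
          rw [Finset.sum_comm]
          refine Finset.sum_congr rfl fun r _ => Finset.sum_congr rfl fun q _ => ?_
          rw [key]; ring
      _ = ∑ r ∈ Finset.range (k + 1), α r * w := by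
          refine Finset.sum_congr rfl fun r hr => ?_
          rw [← Finset.mul_sum]
          congr 1
          exact hβ r (Nat.lt_succ_iff.mp (Finset.mem_range.mp hr))
      _ = w := by rw [← Finset.sum_mul, hα1, one_mul]
  have hsplit : ∀ q ∈ Finset.range (m + 1),
      β q * Fw B α k (s + ((q + c : ℕ) : ZMod n))
      = β q * v + (if q = q0 then β q0 * (Fw B α k (s + ((q0 + c : ℕ) : ZMod n)) - v) else 0) := by
    intro q hq
    by_cases h : q = q0
    · subst h; simp; ring
    · rw [hα q (Nat.lt_succ_iff.mp (Finset.mem_range.mp hq)) h, if_neg h, add_zero]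
  rw [Finset.sum_congr rfl hsplit, Finset.sum_add_distrib, ← Finset.sum_mul, hβ1, one_mul,
    Finset.sum_ite_eq' (Finset.range (m + 1)) q0, if_pos (Finset.mem_range.mpr (Nat.lt_succ_iff.mpr hq0))] at hD
  linarith [hD]


lemma slope_ne {p b L R z : ℝ}
    (heq : (p - b) * (L - z) * (b - R) = -((b - L) * (z - b) * (R - p)))
    (huniq : ∀ w : ℝ, (p - b) * (L - w) * (b - R) = -((b - L) * (w - b) * (R - p)) → w = z) :
    (b - L) * (R - p) - (p - b) * (b - R) ≠ 0 := by
  intro h0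
  have h1 : (p - b) * (L - (z + 1)) * (b - R) = -((b - L) * ((z + 1) - b) * (R - p)) := by
    linear_combination heq + h0
  have := huniq (z + 1) h1
  linarith

lemma slope_ne_first {a b c z : ℝ}
    (heq : (a - z) * (b - c) = (b - a) * (z - b))
    (huniq : ∀ w : ℝ, (a - w) * (b - c) = (b - a) * (w - b) → w = z) :
    (b - a) + (b - c) ≠ 0 := by
  intro h0
  have h1 : (a - (z + 1)) * (b - c) = (b - a) * ((z + 1) - b) := by
    linear_combination heq - h0
  have := huniq (z + 1) h1
  linarith

lemma val_left {p b L R z : ℝ}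
    (heq : (p - b) * (L - z) * (b - R) = -((b - L) * (z - b) * (R - p)))
    (huniq : ∀ w : ℝ, (p - b) * (L - w) * (b - R) = -((b - L) * (w - b) * (R - p)) → w = z)
    (hL : L = b) : z = b := by
  have hden := slope_ne heq huniq
  rw [hL] at heq hden
  have h2 : (b - z) * ((p - b) * (b - R)) = 0 := by linear_combination heq
  have h3 : (p - b) * (b - R) ≠ 0 := fun h => hden (by linear_combination -h)
  rcases mul_eq_zero.mp h2 with h | h
  · linarith
  · exact absurd h h3

lemma val_right {p b L R z : ℝ}
    (heq : (p - b) * (L - z) * (b - R) = -((b - L) * (z - b) * (R - p)))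
    (huniq : ∀ w : ℝ, (p - b) * (L - w) * (b - R) = -((b - L) * (w - b) * (R - p)) → w = z)
    (hR : R = b) : z = b := by
  have hden := slope_ne heq huniq
  rw [hR] at heq hden
  have h2 : (z - b) * ((b - L) * (b - p)) = 0 := by linear_combination heq
  have h3 : (b - L) * (b - p) ≠ 0 := fun h => hden (by linear_combination h)
  rcases mul_eq_zero.mp h2 with h | h
  · linarith
  · exact absurd h h3


lemma sum_shift (α : ℕ → ℝ) (g : ℕ → ℝ) (N : ℕ) :
    ∑ p ∈ Finset.range (N + 1), (if p = 0 then 0 else α (p - 1)) * g p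
      = ∑ q ∈ Finset.range N, α q * g (q + 1) := by
  rw [Finset.sum_range_succ']
  simp

lemma Fw_decomp (B : ZMod n → ℝ) (αW αE αS : ℕ → ℝ) (a bb d : ℝ) (m : ℕ)
    (hWz : αW (m + 2) = 0) (hSz : αS (m + 1) = 0) (t : ZMod n) :
    Fw B (fun p => a * αW p + bb * (if p = 0 then 0 else αE (p - 1))
        + d * (if p = 0 then 0 else αS (p - 1))) (m + 2) t
      = a * Fw B αW (m + 1) t + bb * Fw B αE (m + 1) (t + 1) + d * Fw B αS m (t + 1) := by
  unfold Fw
  simp only [add_mul, mul_assoc]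
  rw [Finset.sum_add_distrib, Finset.sum_add_distrib, ← Finset.mul_sum, ← Finset.mul_sum,
    ← Finset.mul_sum]
  have e1 : ∑ p ∈ Finset.range (m + 2 + 1), αW p * B (t + (p : ZMod n))
      = ∑ p ∈ Finset.range (m + 1 + 1), αW p * B (t + (p : ZMod n)) := by
    rw [Finset.sum_range_succ, hWz, zero_mul, add_zero]
  have e2 : ∑ p ∈ Finset.range (m + 2 + 1), (if p = 0 then 0 else αE (p - 1)) * B (t + (p : ZMod n))
      = ∑ q ∈ Finset.range (m + 1 + 1), αE q * B ((t + 1) + (q : ZMod n)) := by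
    rw [sum_shift]
    refine Finset.sum_congr rfl fun q _ => ?_
    congr 1
    push_cast; ring
  have e3 : ∑ p ∈ Finset.range (m + 2 + 1), (if p = 0 then 0 else αS (p - 1)) * B (t + (p : ZMod n))
      = ∑ q ∈ Finset.range (m + 1), αS q * B ((t + 1) + (q : ZMod n)) := by
    rw [sum_shift]
    have : ∑ q ∈ Finset.range (m + 2), αS q * B (t + ((q + 1 : ℕ) : ZMod n))
        = ∑ q ∈ Finset.range (m + 1), αS q * B (t + ((q + 1 : ℕ) : ZMod n)) := by
      rw [Finset.sum_range_succ, hSz, zero_mul, add_zero]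
    rw [this]
    refine Finset.sum_congr rfl fun q _ => ?_
    congr 1
    push_cast; ring
  rw [e1, e2, e3]



lemma step (B : ZMod n → ℝ) (m : ℕ) (s : ZMod n)
    (vW vC vE vS : ℝ) (αW αC αE αS : ℕ → ℝ)
    (hWz : ∀ r, m + 1 < r → αW r = 0) (hW1 : ∑ r ∈ Finset.range (m + 2), αW r = 1)
    (hW : ∀ j, j ≤ m + 1 → Fw B αW (m + 1) (s + (j : ZMod n)) = vW)
    (hC1 : ∑ r ∈ Finset.range (m + 2), αC r = 1)
    (hC : ∀ j, j ≤ m + 1 → Fw B αC (m + 1) (s + ((j + 1 : ℕ) : ZMod n)) = vC)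
    (hEz : ∀ r, m + 1 < r → αE r = 0) (hE1 : ∑ r ∈ Finset.range (m + 2), αE r = 1)
    (hE : ∀ j, j ≤ m + 1 → Fw B αE (m + 1) (s + ((j + 2 : ℕ) : ZMod n)) = vE)
    (hSz : ∀ r, m < r → αS r = 0) (hS1 : ∑ r ∈ Finset.range (m + 1), αS r = 1)
    (hS : ∀ j, j ≤ m → Fw B αS m (s + ((j + 2 : ℕ) : ZMod n)) = vS)
    (hαC0 : αC 0 ≠ 0) (hαCk : αC (m + 1) ≠ 0) (hαW0 : αW 0 ≠ 0)
    (hvW : vC ≠ vW) (hvE : vC ≠ vE) (hvS : vC ≠ vS)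
    (hden : (vC - vW) * (vE - vS) - (vS - vC) * (vC - vE) ≠ 0) :
    ∃ γ : ℕ → ℝ, ∃ V : ℝ,
      (∀ r, m + 2 < r → γ r = 0) ∧ (∑ r ∈ Finset.range (m + 3), γ r = 1) ∧
      (∀ j, j ≤ m + 2 → Fw B γ (m + 2) (s + (j : ZMod n)) = V) ∧
      γ 0 ≠ 0 ∧ γ (m + 2) ≠ 0 ∧ V ≠ vC ∧
      (vS - vC) * (vW - V) * (vC - vE) = -((vC - vW) * (V - vC) * (vE - vS)) := by
  set den := (vC - vW) * (vE - vS) - (vS - vC) * (vC - vE) with hdendef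
  set a := (vC - vS) * (vC - vE) / den with hadef
  set bb := (vC - vS) * (vC - vW) / den with hbdef
  set d := -((vC - vW) * (vC - vE)) / den with hddef
  set V := a * vW + bb * vE + d * vS with hVdef
  set γ : ℕ → ℝ := fun p => a * αW p + bb * (if p = 0 then 0 else αE (p - 1))
      + d * (if p = 0 then 0 else αS (p - 1)) with hγdef
  have hxW : vC - vW ≠ 0 := sub_ne_zero.mpr hvW
  have hxE : vC - vE ≠ 0 := sub_ne_zero.mpr hvE
  have hxS : vC - vS ≠ 0 := sub_ne_zero.mpr hvS
  have hR1 : vC = vW + αC (m + 1) *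
      (Fw B αW (m + 1) (s + ((m + 1 + 1 : ℕ) : ZMod n)) - vW) := by
    refine pairing B (m+1) (m+1) (m+1) 1 s vW vC αW αC le_rfl hW1 hC1 ?_ ?_
    · exact fun q hq _ => hW (q + 1) (by omega)
    · exact fun r hr => hC r hr
  have hR3 : vC = vE + αC 0 *
      (Fw B αE (m + 1) (s + ((0 + 1 : ℕ) : ZMod n)) - vE) := by
    refine pairing B (m+1) (m+1) 0 1 s vE vC αE αC (by omega) hE1 hC1 ?_ ?_
    · intro q hq hne
      have e : q + 1 = (q - 1) + 2 := by omega
      rw [e]; exact hE (q - 1) (by omega)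
    · exact fun r hr => hC r hr
  have hR5' : vC = vS + αC 0 *
      (Fw B αS m (s + ((0 + 1 : ℕ) : ZMod n)) - vS) := by
    refine pairing B m (m+1) 0 1 s vS vC αS αC (by omega) hS1 hC1 ?_ ?_
    · intro q hq hne
      have e : q + 1 = (q - 1) + 2 := by omega
      rw [e]; exact hS (q - 1) (by omega)
    · exact fun r hr => hC r (by omega)
  have hR5 : vC = vS + αC (m + 1) *
      (Fw B αS m (s + ((m + 1 + 2 : ℕ) : ZMod n)) - vS) := by
    refine pairing B m (m+1) (m+1) 2 s vS vC αS αC le_rfl hS1 hC1 ?_ ?_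
    · exact fun q hq hne => hS q (by omega)
    · intro r hr
      have e : r + 2 = (r + 1) + 1 := by omega
      rw [e]; exact hC (r + 1) (by omega)
  have hR10 : vE = vC + αE (m + 1) *
      (Fw B αC (m + 1) (s + ((m + 1 + 2 : ℕ) : ZMod n)) - vC) := by
    refine pairing B (m+1) (m+1) (m+1) 2 s vC vE αC αE le_rfl hC1 hE1 ?_ ?_
    · intro q hq hne
      have e : q + 2 = (q + 1) + 1 := by omega
      rw [e]; exact hC (q + 1) (by omega)
    · exact fun r hr => hE r hr
  set ω := Fw B αW (m + 1) (s + ((m + 1 + 1 : ℕ) : ZMod n)) - vW with hωdef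
  set η := Fw B αE (m + 1) (s + ((0 + 1 : ℕ) : ZMod n)) - vE with hηdef
  set ρ₀ := Fw B αS m (s + ((0 + 1 : ℕ) : ZMod n)) - vS with hρ₀def
  set ρ₁ := Fw B αS m (s + ((m + 1 + 2 : ℕ) : ZMod n)) - vS with hρ₁def
  set χ := Fw B αC (m + 1) (s + ((m + 1 + 2 : ℕ) : ZMod n)) - vC with hχdef
  have hωe : αC (m + 1) * ω = vC - vW := by linarith [hR1]
  have hηe : αC 0 * η = vC - vE := by linarith [hR3]
  have hρ₀e : αC 0 * ρ₀ = vC - vS := by linarith [hR5']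
  have hρ₁e : αC (m + 1) * ρ₁ = vC - vS := by linarith [hR5]
  have hχe : αE (m + 1) * χ = vE - vC := by linarith [hR10]
  have hχne : χ ≠ 0 := by
    intro h; rw [h, mul_zero] at hχe; exact hvE (by linarith)
  have habd : a + bb + d = 1 := by
    rw [hadef, hbdef, hddef]; field_simp; ring
  have hane : a ≠ 0 := by
    rw [hadef]; exact div_ne_zero (mul_ne_zero hxS hxE) hden
  have hγz : ∀ r, m + 2 < r → γ r = 0 := by
    intro r hr
    have h0 : r ≠ 0 := by omega
    simp only [hγdef, if_neg h0]
    rw [hWz r (by omega), hSz (r - 1) (by omega), hEz (r - 1) (by omega)]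
    ring
  have sW : ∑ p ∈ Finset.range (m + 3), αW p = 1 := by
    rw [show m + 3 = (m + 2) + 1 by omega, Finset.sum_range_succ, hWz (m + 2) (by omega),
      add_zero]
    exact hW1
  have sE : ∑ p ∈ Finset.range (m + 3), (if p = 0 then 0 else αE (p - 1)) = 1 := by
    rw [show m + 3 = (m + 2) + 1 by omega, Finset.sum_range_succ']
    simpa using hE1
  have sS : ∑ p ∈ Finset.range (m + 3), (if p = 0 then 0 else αS (p - 1)) = 1 := by
    rw [show m + 3 = (m + 2) + 1 by omega, Finset.sum_range_succ']
    have h0 : (if (0 : ℕ) = 0 then (0 : ℝ) else αS (0 - 1)) = 0 := if_pos rfl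
    rw [h0, add_zero]
    have hcg : ∀ i ∈ Finset.range (m + 2),
        (if i + 1 = 0 then (0 : ℝ) else αS (i + 1 - 1)) = αS i := by
      intro i _; rw [if_neg (Nat.succ_ne_zero i), Nat.add_sub_cancel]
    rw [Finset.sum_congr rfl hcg, Finset.sum_range_succ, hSz (m + 1) (by omega), add_zero]
    exact hS1
  have hγ1 : ∑ r ∈ Finset.range (m + 3), γ r = 1 := by
    simp only [hγdef]
    rw [Finset.sum_add_distrib, Finset.sum_add_distrib, ← Finset.mul_sum, ← Finset.mul_sum,
      ← Finset.mul_sum, sW, sE, sS, mul_one, mul_one, mul_one]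
    exact habd
  have hfit : ∀ j, j ≤ m + 2 → Fw B γ (m + 2) (s + (j : ZMod n)) = V := by
    intro j hj
    have hdec : Fw B γ (m + 2) (s + (j : ZMod n))
        = a * Fw B αW (m + 1) (s + (j : ZMod n))
          + bb * Fw B αE (m + 1) (s + ((j + 1 : ℕ) : ZMod n))
          + d * Fw B αS m (s + ((j + 1 : ℕ) : ZMod n)) := by
      rw [hγdef, Fw_decomp B αW αE αS a bb d m (hWz _ (by omega)) (hSz _ (by omega))]
      have e : (s + (j : ZMod n)) + 1 = s + ((j + 1 : ℕ) : ZMod n) := by push_cast; ring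
      rw [e]
    rcases Nat.eq_zero_or_pos j with hj0 | hjpos
    · subst hj0
      rw [hdec, hW 0 (by omega)]
      have hE0 : Fw B αE (m + 1) (s + ((0 + 1 : ℕ) : ZMod n)) = vE + η := by
        rw [hηdef]; ring
      have hS0 : Fw B αS m (s + ((0 + 1 : ℕ) : ZMod n)) = vS + ρ₀ := by
        rw [hρ₀def]; ring
      rw [hE0, hS0]
      have hz : bb * η + d * ρ₀ = 0 := by
        have h1 : αC 0 * (bb * η + d * ρ₀) = bb * (vC - vE) + d * (vC - vS) := by
          linear_combination bb * hηe + d * hρ₀e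
        have h2 : bb * (vC - vE) + d * (vC - vS) = 0 := by
          rw [hbdef, hddef]; field_simp; ring
        exact (mul_eq_zero.mp (h1.trans h2)).resolve_left hαC0
      rw [hVdef]; linear_combination hz
    · rcases Nat.lt_or_ge j (m + 2) with hjlt | hjge
      · rw [hdec, hW j (by omega)]
        have e1 : j + 1 = (j - 1) + 2 := by omega
        rw [e1, hE (j - 1) (by omega), hS (j - 1) (by omega), hVdef]
      · have hje : j = m + 2 := by omega
        subst hje
        rw [hdec]
        have p1 : ((m + 2 : ℕ) : ZMod n) = ((m + 1 + 1 : ℕ) : ZMod n) := by push_cast; ring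
        have p2 : ((m + 2 + 1 : ℕ) : ZMod n) = ((m + 1 + 2 : ℕ) : ZMod n) := by push_cast; ring
        rw [p1, p2]
        have hWtop : Fw B αW (m + 1) (s + ((m + 1 + 1 : ℕ) : ZMod n)) = vW + ω := by
          rw [hωdef]; ring
        have hStop : Fw B αS m (s + ((m + 1 + 2 : ℕ) : ZMod n)) = vS + ρ₁ := by
          rw [hρ₁def]; ring
        rw [hWtop, hStop, hE (m + 1) (by omega)]
        have hz : a * ω + d * ρ₁ = 0 := by
          have h1 : αC (m + 1) * (a * ω + d * ρ₁) = a * (vC - vW) + d * (vC - vS) := by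
            linear_combination a * hωe + d * hρ₁e
          have h2 : a * (vC - vW) + d * (vC - vS) = 0 := by
            rw [hadef, hddef]; field_simp; ring
          exact (mul_eq_zero.mp (h1.trans h2)).resolve_left hαCk
        rw [hVdef]; linear_combination hz
  have hVC : V - vC = -((vC - vS) * ((vC - vW) * (vC - vE))) / den := by
    rw [hVdef, hadef, hbdef, hddef]
    field_simp
    ring
  have hVne : V ≠ vC := by
    have h0 : V - vC ≠ 0 := by
      rw [hVC]
      exact div_ne_zero (neg_ne_zero.mpr (mul_ne_zero hxS (mul_ne_zero hxW hxE))) hden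
    exact sub_ne_zero.mp h0
  have hγ0ne : γ 0 ≠ 0 := by
    have hγ0 : γ 0 = a * αW 0 := by simp [hγdef]
    rw [hγ0]; exact mul_ne_zero hane hαW0
  have hR7 : V = vC + γ (m + 2) *
      (Fw B αC (m + 1) (s + ((m + 2 + 1 : ℕ) : ZMod n)) - vC) := by
    refine pairing B (m+1) (m+2) (m+2) 1 s vC V αC γ le_rfl hC1 hγ1 ?_ ?_
    · exact fun q hq hne => hC q (by omega)
    · exact fun r hr => hfit (r + 1) (by omega)
  have hγtopne : γ (m + 2) ≠ 0 := by
    have p2 : ((m + 2 + 1 : ℕ) : ZMod n) = ((m + 1 + 2 : ℕ) : ZMod n) := by push_cast; ring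
    rw [p2] at hR7
    intro h
    rw [h, zero_mul, add_zero] at hR7
    exact hVne hR7
  have hcross : (vS - vC) * (vW - V) * (vC - vE) = -((vC - vW) * (V - vC) * (vE - vS)) := by
    have hV' : V = vC - (vC - vS) * ((vC - vW) * (vC - vE)) / den := by
      linear_combination hVC
    rw [hV']
    field_simp
    rw [hdendef]
    ring
  exact ⟨γ, V, hγz, hγ1, hfit, hγ0ne, hγtopne, hVne, hcross⟩


lemma val_left_first {a b c z : ℝ}
    (heq : (a - z) * (b - c) = (b - a) * (z - b))
    (huniq : ∀ w : ℝ, (a - w) * (b - c) = (b - a) * (w - b) → w = z)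
    (hab : a = b) : z = b := by
  have hden := slope_ne_first heq huniq
  rw [hab] at heq hden
  have h3 : b - c ≠ 0 := fun h => hden (by linear_combination h)
  have h2 : (b - z) * (b - c) = 0 := by linear_combination heq
  rcases mul_eq_zero.mp h2 with h | h
  · linarith
  · exact absurd h h3

lemma val_right_first {a b c z : ℝ}
    (heq : (a - z) * (b - c) = (b - a) * (z - b))
    (huniq : ∀ w : ℝ, (a - w) * (b - c) = (b - a) * (w - b) → w = z)
    (hcb : c = b) : z = b := by
  have hden := slope_ne_first heq huniq
  rw [hcb] at heq hden
  have h3 : b - a ≠ 0 := fun h => hden (by linear_combination h)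
  have h2 : (b - a) * (z - b) = 0 := by linear_combination -heq
  rcases mul_eq_zero.mp h2 with h | h
  · exact absurd h h3
  · linarith

lemma extendW (B : ZMod n → ℝ) (m : ℕ) (s : ZMod n) (vW vC : ℝ) (αW αC : ℕ → ℝ)
    (hWz : ∀ r, m + 1 < r → αW r = 0) (hW1 : ∑ r ∈ Finset.range (m + 2), αW r = 1)
    (hW : ∀ j, j ≤ m + 1 → Fw B αW (m + 1) (s + (j : ZMod n)) = vW)
    (hC1 : ∑ r ∈ Finset.range (m + 2), αC r = 1)
    (hC : ∀ j, j ≤ m + 1 → Fw B αC (m + 1) (s + ((j + 1 : ℕ) : ZMod n)) = vC)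
    (hαCk : αC (m + 1) ≠ 0) (hWeq : vC = vW) :
    ∀ j, j ≤ m + 2 → Fw B αW (m + 2) (s + (j : ZMod n)) = vW := by
  have hR1 : vC = vW + αC (m + 1) *
      (Fw B αW (m + 1) (s + ((m + 1 + 1 : ℕ) : ZMod n)) - vW) := by
    refine pairing B (m+1) (m+1) (m+1) 1 s vW vC αW αC le_rfl hW1 hC1 ?_ ?_
    · exact fun q hq _ => hW (q + 1) (by omega)
    · exact fun r hr => hC r hr
  have hω0 : Fw B αW (m + 1) (s + ((m + 1 + 1 : ℕ) : ZMod n)) = vW := by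
    rw [hWeq] at hR1
    have h1 : αC (m + 1) * (Fw B αW (m + 1) (s + ((m + 1 + 1 : ℕ) : ZMod n)) - vW) = 0 := by
      linarith
    have := (mul_eq_zero.mp h1).resolve_left hαCk
    linarith
  intro j hj
  have hext : Fw B αW (m + 2) (s + (j : ZMod n)) = Fw B αW (m + 1) (s + (j : ZMod n)) := by
    rw [Fw, Fw, Finset.sum_range_succ, hWz (m + 2) (by omega), zero_mul, add_zero]
  rw [hext]
  rcases Nat.lt_or_ge j (m + 2) with hlt | hge
  · exact hW j (by omega)
  · have hje : j = m + 2 := by omega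
    subst hje
    rw [show ((m + 2 : ℕ) : ZMod n) = ((m + 1 + 1 : ℕ) : ZMod n) by push_cast; ring]
    exact hω0

lemma extendE (B : ZMod n → ℝ) (m : ℕ) (s : ZMod n) (vE vC : ℝ) (αE αC : ℕ → ℝ)
    (hEz : ∀ r, m + 1 < r → αE r = 0) (hE1 : ∑ r ∈ Finset.range (m + 2), αE r = 1)
    (hE : ∀ j, j ≤ m + 1 → Fw B αE (m + 1) (s + ((j + 2 : ℕ) : ZMod n)) = vE)
    (hC1 : ∑ r ∈ Finset.range (m + 2), αC r = 1)
    (hC : ∀ j, j ≤ m + 1 → Fw B αC (m + 1) (s + ((j + 1 : ℕ) : ZMod n)) = vC)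
    (hαC0 : αC 0 ≠ 0) (hEeq : vC = vE) :
    (∑ r ∈ Finset.range (m + 3), (if r = 0 then (0:ℝ) else αE (r - 1)) = 1) ∧
    ∀ j, j ≤ m + 2 → Fw B (fun p => if p = 0 then (0:ℝ) else αE (p - 1)) (m + 2)
      (s + (j : ZMod n)) = vE := by
  have hR3 : vC = vE + αC 0 *
      (Fw B αE (m + 1) (s + ((0 + 1 : ℕ) : ZMod n)) - vE) := by
    refine pairing B (m+1) (m+1) 0 1 s vE vC αE αC (by omega) hE1 hC1 ?_ ?_
    · intro q hq hne
      have e : q + 1 = (q - 1) + 2 := by omega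
      rw [e]; exact hE (q - 1) (by omega)
    · exact fun r hr => hC r hr
  have hη0 : Fw B αE (m + 1) (s + ((0 + 1 : ℕ) : ZMod n)) = vE := by
    rw [hEeq] at hR3
    have h1 : αC 0 * (Fw B αE (m + 1) (s + ((0 + 1 : ℕ) : ZMod n)) - vE) = 0 := by linarith
    have := (mul_eq_zero.mp h1).resolve_left hαC0
    linarith
  constructor
  · rw [show m + 3 = (m + 2) + 1 by omega, Finset.sum_range_succ']
    simpa using hE1
  · intro j hj
    have hshift : Fw B (fun p => if p = 0 then (0:ℝ) else αE (p - 1)) (m + 2) (s + (j : ZMod n))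
        = Fw B αE (m + 1) (s + ((j + 1 : ℕ) : ZMod n)) := by
      rw [Fw, Fw, show m + 2 + 1 = (m + 2) + 1 by omega, sum_shift]
      refine Finset.sum_congr rfl fun q _ => ?_
      congr 1
      push_cast; ring
    rw [hshift]
    rcases Nat.eq_zero_or_pos j with hj0 | hjpos
    · subst hj0; exact hη0
    · have e : j + 1 = (j - 1) + 2 := by omega
      rw [e]; exact hE (j - 1) (by omega)

lemma base_fit (B : ZMod n → ℝ) (z : ℝ) (i : ZMod n)
    (heq : (B (i - 1) - z) * (B i - B (i + 1)) = (B i - B (i - 1)) * (z - B i))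
    (huniq : ∀ w : ℝ, (B (i - 1) - w) * (B i - B (i + 1)) = (B i - B (i - 1)) * (w - B i) → w = z)
    (hab : B (i - 1) ≠ B i) (hbc : B i ≠ B (i + 1)) :
    ∃ α : ℕ → ℝ, (∀ r, 1 < r → α r = 0) ∧ (∑ r ∈ Finset.range 2, α r = 1) ∧
      (∀ j : ℕ, j ≤ 1 → Fw B α 1 ((i - ((1 : ℕ) : ZMod n)) + (j : ZMod n)) = z) ∧
      α 0 ≠ 0 ∧ α 1 ≠ 0 ∧ z ≠ B i := by
  set a := B (i - 1) with hadef
  set b := B i with hbdef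
  set c := B (i + 1) with hcdef
  have hden : (b - a) + (b - c) ≠ 0 := slope_ne_first heq huniq
  set α : ℕ → ℝ := fun r => if r = 0 then (b - c) / ((b - a) + (b - c))
      else if r = 1 then (b - a) / ((b - a) + (b - c)) else 0 with hαdef
  have hz : z = (b * b - a * c) / ((b - a) + (b - c)) := by
    refine (huniq _ ?_).symm
    field_simp
    ring
  have hba : b - a ≠ 0 := sub_ne_zero.mpr (Ne.symm hab)
  have hbc' : b - c ≠ 0 := sub_ne_zero.mpr hbc
  refine ⟨α, ?_, ?_, ?_, ?_, ?_, ?_⟩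
  · intro r hr; simp only [hαdef]
    rw [if_neg (by omega), if_neg (by omega)]
  · simp only [hαdef]
    rw [Finset.sum_range_succ, Finset.sum_range_one]
    norm_num
    rw [← add_div, div_eq_one_iff_eq hden]
    ring
  · intro j hj
    rcases Nat.le_one_iff_eq_zero_or_eq_one.mp hj with hj0 | hj1
    · subst hj0
      have e0 : (i - ((1 : ℕ) : ZMod n)) + ((0 : ℕ) : ZMod n) = i - 1 := by push_cast; ring
      rw [e0, Fw, Finset.sum_range_succ, Finset.sum_range_one]
      have p0 : i - 1 + ((0 : ℕ) : ZMod n) = i - 1 := by push_cast; ring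
      have p1 : i - 1 + ((1 : ℕ) : ZMod n) = i := by push_cast; ring
      rw [p0, p1]
      simp only [hαdef]
      norm_num
      rw [hz, ← hadef, ← hbdef]
      field_simp
      ring
    · subst hj1
      have e0 : (i - ((1 : ℕ) : ZMod n)) + ((1 : ℕ) : ZMod n) = i := by push_cast; ring
      rw [e0, Fw, Finset.sum_range_succ, Finset.sum_range_one]
      have p0 : i + ((0 : ℕ) : ZMod n) = i := by push_cast; ring
      have p1 : i + ((1 : ℕ) : ZMod n) = i + 1 := by push_cast; ring
      rw [p0, p1]
      simp only [hαdef]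
      norm_num
      rw [hz, ← hbdef, ← hcdef]
      field_simp
      ring
  · simp only [hαdef]
    norm_num
    exact ⟨hbc', hden⟩
  · simp only [hαdef]
    norm_num
    exact ⟨hba, hden⟩
  · intro h
    rw [hz] at h
    have h2 := (div_eq_iff hden).mp h
    have h3 : (b - a) * (b - c) = 0 := by linear_combination -h2
    rcases mul_eq_zero.mp h3 with h4 | h4
    · exact hba h4
    · exact hbc' h4

lemma cast_bij [NeZero n] : Function.Bijective (fun j : Fin n => ((j : ℕ) : ZMod n)) := by
  rw [Fintype.bijective_iff_injective_and_card]
  constructor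
  · intro j1 j2 h
    have hv := congrArg ZMod.val h
    rw [ZMod.val_cast_of_lt j1.isLt, ZMod.val_cast_of_lt j2.isLt] at hv
    exact Fin.ext hv
  · rw [ZMod.card, Fintype.card_fin]

lemma sum_period [NeZero n] (B : ZMod n → ℝ) (t : ZMod n) :
    ∑ j ∈ Finset.range n, B (t + (j : ZMod n)) = ∑ x : ZMod n, B x := by
  rw [← Fin.sum_univ_eq_sum_range (fun j => B (t + (j : ZMod n))) n]
  have hbij : Function.Bijective (fun j : Fin n => t + ((j : ℕ) : ZMod n)) := by
    have := cast_bij (n := n)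
    exact (Equiv.addLeft t).bijective.comp this
  exact Fintype.sum_bijective _ hbij _ _ (fun j => rfl)

lemma sum_fin [NeZero n] (B : ZMod n → ℝ) :
    ∑ j : Fin n, B ((j : ℕ) : ZMod n) = ∑ x : ZMod n, B x :=
  Fintype.sum_bijective _ (cast_bij (n := n)) _ _ (fun j => rfl)

end LPC

open LPC

/-- **Theorem (collapse of the lower pentagram map).** Starting from the axis-aligned pair
`(∞, B)` and iterating the lower pentagram map `T₁` (expressed via the six-point cross ratio
conditions, degenerate in the first step since the top row is `∞`), the row `Y^{n-1}` is
constant, equal to the center of mass of `B`. -/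
theorem lower_pentagram_collapse_to_center_of_mass
    (n : ℕ) (hn : 2 ≤ n)
    (B : ZMod n → ℝ)
    (Y : ℕ → ZMod n → ℝ)
    (hstart : Y 0 = B)
    (hfirst : ∀ i : ZMod n,
      (B (i - 1) - Y 1 i) * (B i - B (i + 1)) = (B i - B (i - 1)) * (Y 1 i - B i) ∧
      ∀ z : ℝ, (B (i - 1) - z) * (B i - B (i + 1)) = (B i - B (i - 1)) * (z - B i) →
        z = Y 1 i)
    (hstep : ∀ k, 1 ≤ k → k ≤ n - 2 → ∀ i : ZMod n,
      ((Y (k - 1) i - Y k i) * (Y k (i - 1) - Y (k + 1) i) * (Y k i - Y k (i + 1)) =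
          -((Y k i - Y k (i - 1)) * (Y (k + 1) i - Y k i) * (Y k (i + 1) - Y (k - 1) i)) ∧
        ∀ z : ℝ,
          (Y (k - 1) i - Y k i) * (Y k (i - 1) - z) * (Y k i - Y k (i + 1)) =
            -((Y k i - Y k (i - 1)) * (z - Y k i) * (Y k (i + 1) - Y (k - 1) i)) →
          z = Y (k + 1) i)) :
    ∀ i : ZMod n, Y (n - 1) i = (1 / (n : ℝ)) * ∑ j : Fin n, B ((j : ℕ) : ZMod n) := by
  rcases Nat.lt_or_ge n 3 with hlt | hge
  · -- case n = 2
    have hn2 : n = 2 := by omega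
    subst hn2
    intro i
    have h2z : (2 : ZMod 2) = 0 := by decide
    have hi : i + 1 = i - 1 := by linear_combination h2z
    obtain ⟨heq, huniq⟩ := hfirst i
    have hbc : B i ≠ B (i + 1) := by
      intro hb
      have hbi : B (i - 1) = B i := by rw [← hi, ← hb]
      have hall : ∀ w : ℝ, (B (i - 1) - w) * (B i - B (i + 1)) =
          (B i - B (i - 1)) * (w - B i) := by
        intro w
        rw [hbi, ← hb]
        ring
      have h0 := huniq 0 (hall 0)
      have h1 := huniq 1 (hall 1)
      linarith
    have hmean : Y 1 i = (B i + B (i + 1)) / 2 := by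
      refine (huniq _ ?_).symm
      have hbi : B (i - 1) = B (i + 1) := by rw [← hi]
      rw [hbi]
      ring
    rw [show (2 : ℕ) - 1 = 1 from rfl, hmean]
    have hsum : ∑ j : Fin 2, B ((j : ℕ) : ZMod 2) = B 0 + B 1 := by
      simp [Fin.sum_univ_two]
    rw [hsum]
    have hi01 : ∀ j : ZMod 2, j = 0 ∨ j = 1 := by decide
    rcases hi01 i with rfl | rfl
    · rw [show (0 : ZMod 2) + 1 = 1 by decide]; ring
    · rw [show (1 : ZMod 2) + 1 = 0 by decide]; ring
  · -- case n ≥ 3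
    obtain ⟨m0, rfl⟩ : ∃ m0, n = m0 + 3 := ⟨n - 3, by omega⟩
    haveI : NeZero (m0 + 3) := ⟨by omega⟩
    have hden1 : ∀ k, 1 ≤ k → k ≤ m0 + 3 - 2 → ∀ i : ZMod (m0 + 3),
        (Y k i - Y k (i - 1)) * (Y k (i + 1) - Y (k - 1) i)
          - (Y (k - 1) i - Y k i) * (Y k i - Y k (i + 1)) ≠ 0 :=
      fun k hk1 hk2 i => slope_ne (hstep k hk1 hk2 i).1 (hstep k hk1 hk2 i).2
    have hHD0 : ∀ i : ZMod (m0 + 3), B i ≠ B (i + 1) := by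
      intro i heq2
      have e1 : (i + 1) - 1 = i := by ring
      have hj : B ((i + 1) - 1) = B (i + 1) := by rw [e1]; exact heq2
      have h1 : Y 1 (i + 1) = B (i + 1) :=
        val_left_first (hfirst (i + 1)).1 (hfirst (i + 1)).2 hj
      have h2 : Y 1 i = B i :=
        val_right_first (hfirst i).1 (hfirst i).2 heq2.symm
      refine hden1 1 le_rfl (by omega) (i + 1) ?_
      simp only [show (1 : ℕ) - 1 = 0 from rfl, hstart]
      rw [e1, h1, h2, ← heq2]
      ring
    have hHD : ∀ k, 1 ≤ k → k + 1 ≤ m0 + 1 → ∀ i : ZMod (m0 + 3),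
        Y k i ≠ Y k (i + 1) := by
      intro k hk1 hk2 i heq2
      have e1 : (i + 1) - 1 = i := by ring
      have hsj := hstep k hk1 (by omega) (i + 1)
      have hL : Y k ((i + 1) - 1) = Y k (i + 1) := by rw [e1]; exact heq2
      have h1 : Y (k + 1) (i + 1) = Y k (i + 1) := val_left hsj.1 hsj.2 hL
      have hsi := hstep k hk1 (by omega) i
      have h2 : Y (k + 1) i = Y k i := val_right hsi.1 hsi.2 heq2.symm
      refine hden1 (k + 1) (by omega) (by omega) (i + 1) ?_
      simp only [Nat.add_sub_cancel]
      rw [e1, h1, h2, heq2]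
      ring
    have IND : ∀ t : ℕ, t + 1 ≤ m0 + 1 →
        ((∀ i : ZMod (m0 + 3), ∃ α : ℕ → ℝ,
            (∀ r, t + 1 < r → α r = 0) ∧ (∑ r ∈ Finset.range (t + 2), α r = 1) ∧
            (∀ j : ℕ, j ≤ t + 1 →
              Fw B α (t + 1) ((i - ((t + 1 : ℕ) : ZMod (m0 + 3))) + (j : ZMod (m0 + 3)))
                = Y (t + 1) i) ∧
            α 0 ≠ 0 ∧ α (t + 1) ≠ 0 ∧ Y (t + 1) i ≠ Y t i) ∧
          (∀ i : ZMod (m0 + 3), ∃ β : ℕ → ℝ,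
            (∀ r, t < r → β r = 0) ∧ (∑ r ∈ Finset.range (t + 1), β r = 1) ∧
            (∀ j : ℕ, j ≤ t →
              Fw B β t ((i - ((t : ℕ) : ZMod (m0 + 3))) + (j : ZMod (m0 + 3)))
                = Y t i))) := by
      intro t
      induction t with
      | zero =>
        intro _
        constructor
        · intro i
          have hab : B (i - 1) ≠ B i := by
            have h := hHD0 (i - 1)
            rwa [show (i - 1) + 1 = i by ring] at h
          have hbc : B i ≠ B (i + 1) := hHD0 i
          obtain ⟨α, hz, h1, hfit, h0ne, h1ne, hne⟩ :=
            base_fit B (Y 1 i) i (hfirst i).1 (hfirst i).2 hab hbc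
          exact ⟨α, hz, h1, hfit, h0ne, h1ne, by rw [hstart]; exact hne⟩
        · intro i
          refine ⟨fun r => if r = 0 then 1 else 0, ?_, ?_, ?_⟩
          · intro r hr
            show (if r = 0 then (1 : ℝ) else 0) = 0
            rw [if_neg (by omega)]
          · simp
          · intro j hj
            have hj0 : j = 0 := by omega
            subst hj0
            rw [Fw, Finset.sum_range_one, if_pos rfl, one_mul, hstart,
              show (i - ((0 : ℕ) : ZMod (m0 + 3))) + ((0 : ℕ) : ZMod (m0 + 3))
                + ((0 : ℕ) : ZMod (m0 + 3)) = i by push_cast; ring]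
      | succ t ih =>
        intro hb
        obtain ⟨hSt, hPl⟩ := ih (by omega)
        refine ⟨?_, ?_⟩
        · intro i
          obtain ⟨αW, hWz, hW1, hWfit, hαW0, hαWk, hWVD⟩ := hSt (i - 1)
          obtain ⟨αC, hCz, hC1, hCfit, hαC0, hαCk, hCVD⟩ := hSt i
          obtain ⟨αE, hEz, hE1, hEfit, hαE0, hαEk, hEVD⟩ := hSt (i + 1)
          obtain ⟨αS, hSz, hS1, hSfit⟩ := hPl i
          set s : ZMod (m0 + 3) := i - ((t + 1 + 1 : ℕ) : ZMod (m0 + 3)) with hsdef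
          have hW : ∀ j : ℕ, j ≤ t + 1 →
              Fw B αW (t + 1) (s + (j : ZMod (m0 + 3))) = Y (t + 1) (i - 1) := by
            intro j hj
            rw [show s + (j : ZMod (m0 + 3))
              = ((i - 1) - ((t + 1 : ℕ) : ZMod (m0 + 3))) + (j : ZMod (m0 + 3)) by
                rw [hsdef]; push_cast; ring]
            exact hWfit j hj
          have hC : ∀ j : ℕ, j ≤ t + 1 →
              Fw B αC (t + 1) (s + ((j + 1 : ℕ) : ZMod (m0 + 3))) = Y (t + 1) i := by
            intro j hj
            rw [show s + ((j + 1 : ℕ) : ZMod (m0 + 3))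
              = (i - ((t + 1 : ℕ) : ZMod (m0 + 3))) + (j : ZMod (m0 + 3)) by
                rw [hsdef]; push_cast; ring]
            exact hCfit j hj
          have hE : ∀ j : ℕ, j ≤ t + 1 →
              Fw B αE (t + 1) (s + ((j + 2 : ℕ) : ZMod (m0 + 3))) = Y (t + 1) (i + 1) := by
            intro j hj
            rw [show s + ((j + 2 : ℕ) : ZMod (m0 + 3))
              = ((i + 1) - ((t + 1 : ℕ) : ZMod (m0 + 3))) + (j : ZMod (m0 + 3)) by
                rw [hsdef]; push_cast; ring]
            exact hEfit j hj
          have hS : ∀ j : ℕ, j ≤ t →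
              Fw B αS t (s + ((j + 2 : ℕ) : ZMod (m0 + 3))) = Y t i := by
            intro j hj
            rw [show s + ((j + 2 : ℕ) : ZMod (m0 + 3))
              = (i - ((t : ℕ) : ZMod (m0 + 3))) + (j : ZMod (m0 + 3)) by
                rw [hsdef]; push_cast; ring]
            exact hSfit j hj
          have hvW : Y (t + 1) i ≠ Y (t + 1) (i - 1) := by
            have h := hHD (t + 1) (by omega) (by omega) (i - 1)
            rw [show (i - 1) + 1 = i by ring] at h
            exact h.symm
          have hvE : Y (t + 1) i ≠ Y (t + 1) (i + 1) :=
            hHD (t + 1) (by omega) (by omega) i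
          have hsi := hstep (t + 1) (by omega) (by omega) i
          simp only [Nat.add_sub_cancel] at hsi
          have hdenv := slope_ne hsi.1 hsi.2
          obtain ⟨γ, V, hγz, hγ1, hγfit, hγ0, hγtop, hVne, hcross⟩ :=
            step B t s (Y (t + 1) (i - 1)) (Y (t + 1) i) (Y (t + 1) (i + 1)) (Y t i)
              αW αC αE αS hWz hW1 hW hC1 hC hEz hE1 hE hSz hS1 hS
              hαC0 hαCk hαW0 hvW hvE hCVD hdenv
          have hYV : V = Y (t + 1 + 1) i := hsi.2 V hcross
          rw [hYV] at hγfit hVne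
          exact ⟨γ, hγz, hγ1, hγfit, hγ0, hγtop, hVne⟩
        · intro i
          obtain ⟨α, h1, h2, h3, _, _, _⟩ := hSt i
          exact ⟨α, h1, h2, h3⟩
    obtain ⟨hSt, hPl⟩ := IND m0 (by omega)
    have FIN : ∀ i : ZMod (m0 + 3), ∃ γ : ℕ → ℝ,
        (∑ r ∈ Finset.range (m0 + 3), γ r = 1) ∧
        (∀ j : ℕ, j ≤ m0 + 1 + 1 →
          Fw B γ (m0 + 1 + 1) ((i - ((m0 + 1 + 1 : ℕ) : ZMod (m0 + 3)))
            + (j : ZMod (m0 + 3))) = Y (m0 + 1 + 1) i) := by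
      intro i
      obtain ⟨αW, hWz, hW1, hWfit, hαW0, hαWk, hWVD⟩ := hSt (i - 1)
      obtain ⟨αC, hCz, hC1, hCfit, hαC0, hαCk, hCVD⟩ := hSt i
      obtain ⟨αE, hEz, hE1, hEfit, hαE0, hαEk, hEVD⟩ := hSt (i + 1)
      obtain ⟨αS, hSz, hS1, hSfit⟩ := hPl i
      set s : ZMod (m0 + 3) := i - ((m0 + 1 + 1 : ℕ) : ZMod (m0 + 3)) with hsdef
      have hW : ∀ j : ℕ, j ≤ m0 + 1 →
          Fw B αW (m0 + 1) (s + (j : ZMod (m0 + 3))) = Y (m0 + 1) (i - 1) := by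
        intro j hj
        rw [show s + (j : ZMod (m0 + 3))
          = ((i - 1) - ((m0 + 1 : ℕ) : ZMod (m0 + 3))) + (j : ZMod (m0 + 3)) by
            rw [hsdef]; push_cast; ring]
        exact hWfit j hj
      have hC : ∀ j : ℕ, j ≤ m0 + 1 →
          Fw B αC (m0 + 1) (s + ((j + 1 : ℕ) : ZMod (m0 + 3))) = Y (m0 + 1) i := by
        intro j hj
        rw [show s + ((j + 1 : ℕ) : ZMod (m0 + 3))
          = (i - ((m0 + 1 : ℕ) : ZMod (m0 + 3))) + (j : ZMod (m0 + 3)) by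
            rw [hsdef]; push_cast; ring]
        exact hCfit j hj
      have hE : ∀ j : ℕ, j ≤ m0 + 1 →
          Fw B αE (m0 + 1) (s + ((j + 2 : ℕ) : ZMod (m0 + 3))) = Y (m0 + 1) (i + 1) := by
        intro j hj
        rw [show s + ((j + 2 : ℕ) : ZMod (m0 + 3))
          = ((i + 1) - ((m0 + 1 : ℕ) : ZMod (m0 + 3))) + (j : ZMod (m0 + 3)) by
            rw [hsdef]; push_cast; ring]
        exact hEfit j hj
      have hS : ∀ j : ℕ, j ≤ m0 →
          Fw B αS m0 (s + ((j + 2 : ℕ) : ZMod (m0 + 3))) = Y m0 i := by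
        intro j hj
        rw [show s + ((j + 2 : ℕ) : ZMod (m0 + 3))
          = (i - ((m0 : ℕ) : ZMod (m0 + 3))) + (j : ZMod (m0 + 3)) by
            rw [hsdef]; push_cast; ring]
        exact hSfit j hj
      have hsi := hstep (m0 + 1) (by omega) (by omega) i
      simp only [Nat.add_sub_cancel] at hsi
      by_cases hWeq : Y (m0 + 1) i = Y (m0 + 1) (i - 1)
      · have hzv : Y (m0 + 1 + 1) i = Y (m0 + 1) i := val_left hsi.1 hsi.2 hWeq.symm
        have hfitW := extendW B m0 s (Y (m0 + 1) (i - 1)) (Y (m0 + 1) i) αW αC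
          hWz hW1 hW hC1 hC hαCk hWeq
        refine ⟨αW, ?_, ?_⟩
        · rw [show m0 + 3 = (m0 + 2) + 1 from rfl, Finset.sum_range_succ,
            hWz (m0 + 2) (by omega), add_zero]
          exact hW1
        · intro j hj
          rw [hfitW j hj, ← hWeq, ← hzv]
      · by_cases hEeq : Y (m0 + 1) i = Y (m0 + 1) (i + 1)
        · have hzv : Y (m0 + 1 + 1) i = Y (m0 + 1) i := val_right hsi.1 hsi.2 hEeq.symm
          obtain ⟨hsum1, hfitE⟩ := extendE B m0 s (Y (m0 + 1) (i + 1)) (Y (m0 + 1) i) αE αC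
            hEz hE1 hE hC1 hC hαC0 hEeq
          refine ⟨_, hsum1, ?_⟩
          intro j hj
          rw [hfitE j hj, ← hEeq, ← hzv]
        · have hdenv := slope_ne hsi.1 hsi.2
          obtain ⟨γ, V, hγz, hγ1, hγfit, hγ0, hγtop, hVne, hcross⟩ :=
            step B m0 s (Y (m0 + 1) (i - 1)) (Y (m0 + 1) i) (Y (m0 + 1) (i + 1)) (Y m0 i)
              αW αC αE αS hWz hW1 hW hC1 hC hEz hE1 hE hSz hS1 hS
              hαC0 hαCk hαW0 hWeq hEeq hCVD hdenv
          have hYV : V = Y (m0 + 1 + 1) i := hsi.2 V hcross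
          rw [hYV] at hγfit
          exact ⟨γ, hγ1, hγfit⟩
    intro i
    obtain ⟨γ, hγ1, hγfit⟩ := FIN i
    set s : ZMod (m0 + 3) := i - ((m0 + 1 + 1 : ℕ) : ZMod (m0 + 3)) with hsdef
    have hnv : ((m0 + 3 : ℕ) : ℝ) * Y (m0 + 1 + 1) i = ∑ x : ZMod (m0 + 3), B x := by
      calc ((m0 + 3 : ℕ) : ℝ) * Y (m0 + 1 + 1) i
          = ∑ _j ∈ Finset.range (m0 + 3), Y (m0 + 1 + 1) i := by
            rw [Finset.sum_const, Finset.card_range, nsmul_eq_mul]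
        _ = ∑ j ∈ Finset.range (m0 + 3), Fw B γ (m0 + 1 + 1) (s + (j : ZMod (m0 + 3))) := by
            refine Finset.sum_congr rfl fun j hj => ?_
            rw [hγfit j (by
              have := Finset.mem_range.mp hj
              omega)]
        _ = ∑ r ∈ Finset.range (m0 + 3), γ r
              * (∑ j ∈ Finset.range (m0 + 3), B ((s + (r : ZMod (m0 + 3))) + (j : ZMod (m0 + 3)))) := by
            simp only [Fw]
            rw [Finset.sum_comm]
            refine Finset.sum_congr rfl fun r _ => ?_
            rw [Finset.mul_sum]
            refine Finset.sum_congr rfl fun j _ => ?_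
            rw [show (s + (j : ZMod (m0 + 3))) + (r : ZMod (m0 + 3))
              = (s + (r : ZMod (m0 + 3))) + (j : ZMod (m0 + 3)) by ring]
        _ = ∑ r ∈ Finset.range (m0 + 3), γ r * (∑ x : ZMod (m0 + 3), B x) := by
            refine Finset.sum_congr rfl fun r _ => ?_
            rw [sum_period B (s + (r : ZMod (m0 + 3)))]
        _ = ∑ x : ZMod (m0 + 3), B x := by
            rw [← Finset.sum_mul, hγ1, one_mul]
    rw [show (m0 + 3 - 1 : ℕ) = m0 + 1 + 1 by omega, sum_fin B]
    have hc0 : ((m0 + 3 : ℕ) : ℝ) ≠ 0 := Nat.cast_ne_zero.mpr (by omega)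
    rw [one_div, inv_mul_eq_div, eq_div_iff hc0]
    linear_combination hnv
end

section
/- Let n ≥ 2 and let X, Y : ℤ/n → ℝ² be such that for every i ∈ ℤ/n: X(i) ≠ r(X(i+1)), X(i−1) ≠ r(X(i)), the line through X(i) and r(X(i+1)) is distinct from the line through X(i−1) and r(X(i)), Y(i) lies on both of these lines (i.e. Y is the image of X under the mirror pentagram map), and moreover Y(i) ≠ Y(i+1). Then the mirror pentagram map is inverted by the intersection construction of the paper: for every i ∈ ℤ/n, the point X(i) lies both on the line through Y(i) and Y(i+1) and on the line through r(Y(i−1)) and r(Y(i)). -/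
/-- Reflection of the plane about the `x`-axis. -/
def mirrorReflect (p : Fin 2 → ℝ) : Fin 2 → ℝ := ![p 0, -p 1]

/-- `mirrorReflect` as a linear map. -/
def mirrorLin : (Fin 2 → ℝ) →ₗ[ℝ] (Fin 2 → ℝ) where
  toFun := mirrorReflect
  map_add' p q := by
    funext i
    fin_cases i <;> simp [mirrorReflect] <;> ring
  map_smul' c p := by
    funext i
    fin_cases i <;> simp [mirrorReflect] <;> ring

lemma mirrorReflect_involutive (p : Fin 2 → ℝ) :
    mirrorReflect (mirrorReflect p) = p := by
  funext i
  fin_cases i <;> simp [mirrorReflect] <;> ring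

lemma mirrorReflect_injective : Function.Injective mirrorReflect := by
  intro p q hpq
  have := congrArg mirrorReflect hpq
  rwa [mirrorReflect_involutive, mirrorReflect_involutive] at this

lemma mirrorReflect_mem_span {a b p : Fin 2 → ℝ}
    (hp : p ∈ affineSpan ℝ ({a, b} : Set (Fin 2 → ℝ))) :
    mirrorReflect p ∈ affineSpan ℝ ({mirrorReflect a, mirrorReflect b} : Set (Fin 2 → ℝ)) := by
  have h : mirrorReflect p ∈ (affineSpan ℝ ({a, b} : Set (Fin 2 → ℝ))).map
      mirrorLin.toAffineMap := ⟨p, hp, rfl⟩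
  rw [AffineSubspace.map_span] at h
  have himg : (mirrorLin.toAffineMap : (Fin 2 → ℝ) → (Fin 2 → ℝ)) '' {a, b}
      = {mirrorReflect a, mirrorReflect b} := by
    simp [Set.image_pair]
    rfl
  rwa [himg] at h

/-- If `p ≠ q` and `p, q, x` all lie on the line through `a, b`, then `x` lies on the line
through `p, q`. -/
lemma mem_span_pair_of_mem {a b p q x : Fin 2 → ℝ} (hpq : p ≠ q)
    (hp : p ∈ affineSpan ℝ ({a, b} : Set (Fin 2 → ℝ)))
    (hq : q ∈ affineSpan ℝ ({a, b} : Set (Fin 2 → ℝ)))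
    (hx : x ∈ affineSpan ℝ ({a, b} : Set (Fin 2 → ℝ))) :
    x ∈ affineSpan ℝ ({p, q} : Set (Fin 2 → ℝ)) := by
  have hc := collinear_triple_of_mem_affineSpan_pair hp hq hx
  exact hc.mem_affineSpan_of_mem_of_ne (by simp) (by simp) (by simp) hpq

/-- **Lemma (the mirror pentagram map has an inverse).** If `Y` is the image of `X` under the
mirror pentagram map (with all the relevant points distinct and lines distinct), and moreover
`Y(i) ≠ Y(i+1)` for all `i`, then `X(i)` lies on the line through `Y(i)` and `Y(i+1)` and on
the line through `r(Y(i-1))` and `r(Y(i))`. -/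
theorem mirror_pentagram_inverse
    (n : ℕ) (hn : 2 ≤ n)
    (X Y : ZMod n → (Fin 2 → ℝ))
    (h : ∀ i : ZMod n,
      X i ≠ mirrorReflect (X (i + 1)) ∧
      X (i - 1) ≠ mirrorReflect (X i) ∧
      affineSpan ℝ {X i, mirrorReflect (X (i + 1))} ≠
        affineSpan ℝ {X (i - 1), mirrorReflect (X i)} ∧
      Y i ∈ affineSpan ℝ {X i, mirrorReflect (X (i + 1))} ∧
      Y i ∈ affineSpan ℝ {X (i - 1), mirrorReflect (X i)} ∧
      Y i ≠ Y (i + 1)) :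
    ∀ i : ZMod n,
      X i ∈ affineSpan ℝ {Y i, Y (i + 1)} ∧
      X i ∈ affineSpan ℝ {mirrorReflect (Y (i - 1)), mirrorReflect (Y i)} := by
  intro i
  constructor
  · -- both `Y i` and `Y (i+1)` lie on the line through `X i` and `r (X (i+1))`
    have hYi : Y i ∈ affineSpan ℝ ({X i, mirrorReflect (X (i + 1))} : Set (Fin 2 → ℝ)) :=
      (h i).2.2.2.1
    have hYi1 : Y (i + 1) ∈ affineSpan ℝ ({X i, mirrorReflect (X (i + 1))} : Set (Fin 2 → ℝ)) := by
      have := (h (i + 1)).2.2.2.2.1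
      rwa [add_sub_cancel_right] at this
    exact mem_span_pair_of_mem (h i).2.2.2.2.2 hYi hYi1
      (left_mem_affineSpan_pair ℝ _ _)
  · -- both `Y (i-1)` and `Y i` lie on the line through `X (i-1)` and `r (X i)`
    have hYm : Y (i - 1) ∈ affineSpan ℝ ({X (i - 1), mirrorReflect (X i)} : Set (Fin 2 → ℝ)) := by
      have := (h (i - 1)).2.2.2.1
      rwa [sub_add_cancel] at this
    have hYi : Y i ∈ affineSpan ℝ ({X (i - 1), mirrorReflect (X i)} : Set (Fin 2 → ℝ)) :=
      (h i).2.2.2.2.1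
    have hrYm := mirrorReflect_mem_span hYm
    have hrYi := mirrorReflect_mem_span hYi
    rw [mirrorReflect_involutive] at hrYm hrYi
    have hne : mirrorReflect (Y (i - 1)) ≠ mirrorReflect (Y i) := by
      intro hc
      have := mirrorReflect_injective hc
      have h2 := (h (i - 1)).2.2.2.2.2
      rw [sub_add_cancel] at h2
      exact h2 this
    exact mem_span_pair_of_mem hne hrYm hrYi
      (right_mem_affineSpan_pair ℝ _ _)
end

section
/- Let P₀, P₁, P₂ ∈ ℝ² and write r(x,y) = (x,−y). Suppose D ∈ ℝ² lies on both the line through P₁ and P₂ and the line through r(P₀) and r(P₁), where P₁ ≠ P₂, r(P₀) ≠ r(P₁), and these two lines are distinct (D is the inverse mirror pentagram point). Suppose E ∈ ℝ² lies on both the line through P₁ and r(P₂) and the line through P₀ and r(P₁), where P₁ ≠ r(P₂), P₀ ≠ r(P₁), and these two lines are distinct (E is the mirror pentagram point). Writing x(·) for the first coordinate of a point of ℝ², the six first coordinates satisfy the lower pentagram map relation: (x(D) − x(P₁))·(x(P₀) − x(E))·(x(P₁) − x(P₂)) = −(x(P₁) − x(P₀))·(x(E) − x(P₁))·(x(P₂)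 − x(D)), i.e. the six-point cross ratio [x(D), x(P₁), x(P₀), x(E), x(P₁), x(P₂)] equals −1. -/
lemma mirrorReflect_zero (p : Fin 2 → ℝ) : mirrorReflect p 0 = p 0 := rfl
lemma mirrorReflect_one (p : Fin 2 → ℝ) : mirrorReflect p 1 = -p 1 := rfl

lemma cross_ne_zero (a b c d p : Fin 2 → ℝ) (hab : a ≠ b) (hcd : c ≠ d)
    (hspan : affineSpan ℝ {a, b} ≠ affineSpan ℝ {c, d})
    (hp1 : p ∈ affineSpan ℝ {a, b}) (hp2 : p ∈ affineSpan ℝ {c, d}) :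
    (b 0 - a 0) * (d 1 - c 1) - (d 0 - c 0) * (b 1 - a 1) ≠ 0 := by
  intro h
  apply hspan
  apply AffineSubspace.ext_of_direction_eq
  · rw [direction_affineSpan, direction_affineSpan, vectorSpan_pair, vectorSpan_pair]
    have hv : (a - b : Fin 2 → ℝ) ≠ 0 := sub_ne_zero.mpr (by exact fun h' => hab h')
    have hw : (c - d : Fin 2 → ℝ) ≠ 0 := sub_ne_zero.mpr (by exact fun h' => hcd h')
    obtain ⟨k, hk0, hk⟩ : ∃ k : ℝ, k ≠ 0 ∧ (c - d : Fin 2 → ℝ) = k • (a - b) := by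
      by_cases h0 : a 0 - b 0 ≠ 0
      · refine ⟨(c 0 - d 0) / (a 0 - b 0), ?_, ?_⟩
        · intro hk
          apply hw
          have h1 : c 0 - d 0 = 0 := by
            field_simp at hk; linarith
          have h2 : c 1 - d 1 = 0 := by
            have h3 : (a 0 - b 0) * (c 1 - d 1) = 0 := by
              linear_combination h - (b 1 - a 1) * h1
            rcases mul_eq_zero.mp h3 with h4 | h4
            · exact absurd h4 h0
            · exact h4
          funext i; fin_cases i <;> simp <;> linarith
        · funext i; fin_cases i <;> simp <;> field_simp <;>
            first | linear_combination h | linear_combination -h |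
              linear_combination 2*h | linear_combination -2*h
      · push_neg at h0
        have h1 : a 1 - b 1 ≠ 0 := by
          intro h1'
          apply hv
          funext i; fin_cases i <;> simp <;> linarith
        refine ⟨(c 1 - d 1) / (a 1 - b 1), ?_, ?_⟩
        · intro hk
          apply hw
          have hcd1 : c 1 - d 1 = 0 := by field_simp at hk; linarith
          have hcd0 : c 0 - d 0 = 0 := by
            have h3 : (a 1 - b 1) * (c 0 - d 0) = 0 := by
              linear_combination -h - (b 0 - a 0) * hcd1
            rcases mul_eq_zero.mp h3 with h4 | h4
            · exact absurd h4 h1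
            · exact h4
          funext i; fin_cases i <;> simp <;> linarith
        · funext i; fin_cases i <;> simp <;> field_simp <;>
            first | linear_combination h | linear_combination -h |
              linear_combination 2*h | linear_combination -2*h
    rw [show (a -ᵥ b : Fin 2 → ℝ) = a - b from rfl, show (c -ᵥ d : Fin 2 → ℝ) = c - d from rfl, hk]
    rw [Submodule.span_singleton_smul_eq (isUnit_iff_ne_zero.mpr hk0) _]
  · exact ⟨p, hp1, hp2⟩

lemma mem_pair_param (a b p : Fin 2 → ℝ) (h : p ∈ affineSpan ℝ {a, b}) :
    ∃ t : ℝ, ∀ i, p i = a i + t * (b i - a i) := by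
  have h2 := AffineSubspace.vsub_mem_direction h (left_mem_affineSpan_pair ℝ a b)
  rw [direction_affineSpan] at h2
  obtain ⟨t, ht⟩ := mem_vectorSpan_pair_rev.mp h2
  refine ⟨t, fun i => ?_⟩
  have := congrFun ht i
  simp only [vsub_eq_sub, Pi.sub_apply, Pi.smul_apply, smul_eq_mul] at this
  linarith [this]

/-- **Lemma (one step: mirror pentagram map projects to the lower pentagram map).**
If `D` is the inverse mirror pentagram point of `P₀, P₁, P₂` and `E` is their mirror
pentagram point, then the six first coordinates satisfy the six-point cross ratio relation
`[x(D), x(P₁), x(P₀), x(E), x(P₁), x(P₂)] = -1`. -/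
theorem mirror_pentagram_projects_to_lower_pentagram
    (P₀ P₁ P₂ D E : Fin 2 → ℝ)
    (hD1 : P₁ ≠ P₂)
    (hD2 : mirrorReflect P₀ ≠ mirrorReflect P₁)
    (hD3 : affineSpan ℝ {P₁, P₂} ≠ affineSpan ℝ {mirrorReflect P₀, mirrorReflect P₁})
    (hD4 : D ∈ affineSpan ℝ {P₁, P₂})
    (hD5 : D ∈ affineSpan ℝ {mirrorReflect P₀, mirrorReflect P₁})
    (hE1 : P₁ ≠ mirrorReflect P₂)
    (hE2 : P₀ ≠ mirrorReflect P₁)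
    (hE3 : affineSpan ℝ {P₁, mirrorReflect P₂} ≠ affineSpan ℝ {P₀, mirrorReflect P₁})
    (hE4 : E ∈ affineSpan ℝ {P₁, mirrorReflect P₂})
    (hE5 : E ∈ affineSpan ℝ {P₀, mirrorReflect P₁}) :
    (D 0 - P₁ 0) * (P₀ 0 - E 0) * (P₁ 0 - P₂ 0) =
      -((P₁ 0 - P₀ 0) * (E 0 - P₁ 0) * (P₂ 0 - D 0)) := by
  obtain ⟨t, ht⟩ := mem_pair_param _ _ _ hD4
  obtain ⟨s, hs⟩ := mem_pair_param _ _ _ hD5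
  obtain ⟨u, hu⟩ := mem_pair_param _ _ _ hE4
  obtain ⟨v, hv⟩ := mem_pair_param _ _ _ hE5
  have hα := cross_ne_zero _ _ _ _ _ hD1 hD2 hD3 hD4 hD5
  have hβ := cross_ne_zero _ _ _ _ _ hE1 hE2 hE3 hE4 hE5
  have d0t := ht 0; have d1t := ht 1
  have ds0 := hs 0; have ds1 := hs 1
  have e0u := hu 0; have e1u := hu 1
  have e0v := hv 0; have e1v := hv 1
  simp only [mirrorReflect_zero, mirrorReflect_one] at hα hβ ds0 ds1 e0u e1u e0v e1v
  set x0 := P₀ 0; set x1 := P₁ 0; set x2 := P₂ 0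
  set y0 := P₀ 1; set y1 := P₁ 1; set y2 := P₂ 1
  set A := x2 - x1 with hA'
  set B := x1 - x0 with hB'
  -- α and β
  have hα' : A * (y0 - y1) - B * (y2 - y1) ≠ 0 := by
    intro h; exact hα (by rw [hA', hB']; linear_combination h)
  have hβ' : A * (y0 + y1) - B * (y2 + y1) ≠ 0 := by
    intro h; exact hβ (by rw [hA', hB']; linear_combination -h)
  have key1 : t * (A * (y0 - y1) - B * (y2 - y1)) = 2 * B * y1 := by
    rw [hA', hB']
    linear_combination (y0 - y1) * (ds0 - d0t) - (x1 - x0) * (ds1 - d1t)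
  have key2 : u * (A * (y0 + y1) - B * (y2 + y1)) = -(2 * B * y1) := by
    rw [hA', hB']
    linear_combination (y0 + y1) * (e0v - e0u) + (x1 - x0) * (e1v - e1u)
  rw [d0t, e0u]
  have goal' : (x1 + t * (x2 - x1) - x1) * (x0 - (x1 + u * (x2 - x1))) * (x1 - x2) +
      (x1 - x0) * (x1 + u * (x2 - x1) - x1) * (x2 - (x1 + t * (x2 - x1))) =
      A * A * (t * B + t * u * A + u * B - u * t * B) := by
    rw [hA', hB']; ring
  have main : t * B + t * u * A + u * B - u * t * B = 0 := by
    have ht' : t = 2 * B * y1 / (A * (y0 - y1) - B * (y2 - y1)) :=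
      eq_div_of_mul_eq hα' key1
    have hu' : u = -(2 * B * y1) / (A * (y0 + y1) - B * (y2 + y1)) :=
      eq_div_of_mul_eq hβ' key2
    rw [ht', hu']
    field_simp
    ring
  linear_combination goal' + A * A * main
end

section
/- Let V₂, X₁, X₃, Y₀, Y₂, Y₄, Z₁, Z₃, W₂ be real numbers arranged in the diamond pattern of a cross ratio frieze, and assume each bottom entry is the unique solution of its diamond relation; that is: Y₂ is the unique real z with (V₂ − X₁)·(z − X₃) = −(X₁ − z)·(X₃ − V₂); Z₁ is the unique real z with (X₁ − Y₀)·(z − Y₂) = −(Y₀ − z)·(Y₂ − X₁); Z₃ is the unique real z with (X₃ − Y₂)·(z − Y₄) = −(Y₂ − z)·(Y₄ − X₃); and W₂ is the unique real z with (Y₂ − Z₁)·(z − Z₃) = −(Z₁ − z)·(Z₃ − Y₂). Then the six-point cross ratio condition [V₂, Y₂, Y₀, W₂, Y₂, Y₄] = −1 holds, i.e. (V₂ − Y₂)·(Y₀ − W₂)·(Y₂ − Y₄) = −(Y₂ − Y₀)·(W₂ − Y₂)·(Y₄ − V₂). (Hence two vertical steps in a cross ratio frieze pattern realize one step of the lower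 pentagram map.) -/
set_option maxHeartbeats 1000000


/-- **Lemma (two frieze steps give one lower pentagram step).** If in a diamond pattern of a
cross ratio frieze each bottom entry is the unique solution of its diamond relation
(cross ratio `-1`), then the six-point cross ratio condition
`[V₂, Y₂, Y₀, W₂, Y₂, Y₄] = -1` holds. -/
theorem frieze_two_steps_give_lower_pentagram
    (V₂ X₁ X₃ Y₀ Y₂ Y₄ Z₁ Z₃ W₂ : ℝ)
    (hY₂ : (V₂ - X₁) * (Y₂ - X₃) = -((X₁ - Y₂) * (X₃ - V₂)) ∧
      ∀ z : ℝ, (V₂ - X₁) * (z - X₃) = -((X₁ - z) * (X₃ - V₂)) → z = Y₂)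
    (hZ₁ : (X₁ - Y₀) * (Z₁ - Y₂) = -((Y₀ - Z₁) * (Y₂ - X₁)) ∧
      ∀ z : ℝ, (X₁ - Y₀) * (z - Y₂) = -((Y₀ - z) * (Y₂ - X₁)) → z = Z₁)
    (hZ₃ : (X₃ - Y₂) * (Z₃ - Y₄) = -((Y₂ - Z₃) * (Y₄ - X₃)) ∧
      ∀ z : ℝ, (X₃ - Y₂) * (z - Y₄) = -((Y₂ - z) * (Y₄ - X₃)) → z = Z₃)
    (hW₂ : (Y₂ - Z₁) * (W₂ - Z₃) = -((Z₁ - W₂) * (Z₃ - Y₂)) ∧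
      ∀ z : ℝ, (Y₂ - Z₁) * (z - Z₃) = -((Z₁ - z) * (Z₃ - Y₂)) → z = W₂) :
    (V₂ - Y₂) * (Y₀ - W₂) * (Y₂ - Y₄) = -((Y₂ - Y₀) * (W₂ - Y₂) * (Y₄ - V₂)) := by
  obtain ⟨e1, u1⟩ := hY₂
  obtain ⟨e2, u2⟩ := hZ₁
  obtain ⟨e3, u3⟩ := hZ₃
  obtain ⟨e4, u4⟩ := hW₂
  -- nondegeneracy from uniqueness
  have n1 : 2*V₂ - X₁ - X₃ ≠ 0 := by
    intro h
    have h2 : (V₂ - X₁) * ((Y₂+1) - X₃) = -((X₁ - (Y₂+1)) * (X₃ - V₂)) := by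
      linear_combination e1 + h
    have := u1 _ h2
    linarith
  have n2 : 2*X₁ - Y₀ - Y₂ ≠ 0 := by
    intro h
    have h2 : (X₁ - Y₀) * ((Z₁+1) - Y₂) = -((Y₀ - (Z₁+1)) * (Y₂ - X₁)) := by
      linear_combination e2 + h
    have := u2 _ h2
    linarith
  have n3 : 2*X₃ - Y₂ - Y₄ ≠ 0 := by
    intro h
    have h2 : (X₃ - Y₂) * ((Z₃+1) - Y₄) = -((Y₂ - (Z₃+1)) * (Y₄ - X₃)) := by
      linear_combination e3 + h
    have := u3 _ h2
    linarith
  have n4 : 2*Y₂ - Z₁ - Z₃ ≠ 0 := by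
    intro h
    have h2 : (Y₂ - Z₁) * ((W₂+1) - Z₃) = -((Z₁ - (W₂+1)) * (Z₃ - Y₂)) := by
      linear_combination e4 + h
    have := u4 _ h2
    linarith
  -- the "solved" denominator for V₂ is also nonzero
  have hd : X₁ + X₃ - 2*Y₂ ≠ 0 := by
    intro h
    have hsq : (X₁ - X₃)^2 = 0 := by
      linear_combination (-2:ℝ)*e1 + (X₁ + X₃ - 2*V₂)*h
    have hx : X₁ = X₃ := by
      have := sq_eq_zero_iff.mp hsq
      linarith
    have hx1 : X₁ = Y₂ := by linarith
    have hx3 : X₃ = Y₂ := by linarith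
    have hz1 : Z₁ = Y₂ := by
      have h0 : (Y₂ - Y₀) * (Z₁ - Y₂) = 0 := by
        linear_combination e2 - (2*Z₁ - Y₂ - Y₀) * hx1
      rcases mul_eq_zero.mp h0 with h' | h'
      · exfalso; apply n2; linarith
      · linarith
    have hz3 : Z₃ = Y₂ := by
      have h0 : (Y₂ - Z₃) * (Y₄ - Y₂) = 0 := by
        linear_combination e3 + (Y₂ + Y₄ - 2*Z₃) * hx3
      rcases mul_eq_zero.mp h0 with h' | h'
      · linarith
      · exfalso; apply n3; linarith
    apply n4
    linarith
  -- solved values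
  have hVv : V₂ = (2*X₁*X₃ - Y₂*(X₁+X₃)) / (X₁ + X₃ - 2*Y₂) := by
    rw [eq_div_iff hd]
    linear_combination -e1
  have hZ1v : Z₁ = (X₁*(Y₀+Y₂) - 2*Y₀*Y₂) / (2*X₁ - Y₀ - Y₂) := by
    rw [eq_div_iff n2]
    linear_combination e2
  have hZ3v : Z₃ = (X₃*(Y₂+Y₄) - 2*Y₂*Y₄) / (2*X₃ - Y₂ - Y₄) := by
    rw [eq_div_iff n3]
    linear_combination e3
  -- express W₂ over the base variables
  set p2 : ℝ := X₁*(Y₀+Y₂) - 2*Y₀*Y₂ with hp2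
  set q2 : ℝ := 2*X₁ - Y₀ - Y₂ with hq2
  set p3 : ℝ := X₃*(Y₂+Y₄) - 2*Y₂*Y₄ with hp3
  set q3 : ℝ := 2*X₃ - Y₂ - Y₄ with hq3
  have hM : 2*Y₂*q2*q3 - p2*q3 - p3*q2 ≠ 0 := by
    have : 2*Y₂*q2*q3 - p2*q3 - p3*q2 = (2*Y₂ - Z₁ - Z₃) * q2 * q3 := by
      rw [hZ1v, hZ3v]
      field_simp
    rw [this]
    exact mul_ne_zero (mul_ne_zero n4 n2) n3
  have hW2v : W₂ = (Y₂*(p2*q3 + p3*q2) - 2*p2*p3) / (2*Y₂*q2*q3 - p2*q3 - p3*q2) := by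
    rw [eq_div_iff hM]
    have e4' : W₂ * (2*Y₂ - Z₁ - Z₃) = Y₂*(Z₁+Z₃) - 2*Z₁*Z₃ := by
      linear_combination e4
    rw [hZ1v, hZ3v] at e4'
    field_simp at e4'
    linear_combination e4'
  rw [hVv, hW2v]
  generalize hMdef : (2*Y₂*q2*q3 - p2*q3 - p3*q2) = M at hM ⊢
  field_simp
  subst hMdef
  rw [hp2, hq2, hp3, hq3]
  ring
end

section
/- Let X₁, X₃, Y₀, Y₄ be real numbers and set Y₂ = (X₁ + X₃)/2 (the degenerate diamond condition below an entry ∞). Let Z₁ be the unique real z with (X₁ − Y₀)·(z − Y₂) = −(Y₀ − z)·(Y₂ − X₁), let Z₃ be the unique real z with (X₃ − Y₂)·(z − Y₄) = −(Y₂ − z)·(Y₄ − X₃), and let W₂ be the unique real z with (Y₂ − Z₁)·(z − Z₃) = −(Z₁ − z)·(Z₃ − Y₂). If X₁ + X₃ − Y₀ − Y₄ ≠ 0, then W₂ = ((X₁ + X₃)² − 4·Y₀·Y₄) / (4·(X₁ + X₃ − Y₀ − Y₄)). -/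
/-- Solve a harmonic-conjugate diamond relation: uniqueness forces the linear
coefficient to be nonzero, and the solution satisfies the cleared linear equation. -/
lemma frieze_aux (A B C Z : ℝ)
    (h1 : (A - B) * (Z - C) = -((B - Z) * (C - A)))
    (h2 : ∀ z : ℝ, (A - B) * (z - C) = -((B - z) * (C - A)) → z = Z) :
    2 * A - B - C ≠ 0 ∧ Z * (2 * A - B - C) = A * C + A * B - 2 * B * C := by
  constructor
  · intro h0
    have := h2 (Z + 1) (by linear_combination h1 + h0)
    linarith
  · linear_combination h1

/-- **Lemma (the explicit frieze formula).** In a cross ratio frieze pattern whose top row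
is constantly `∞`, so that `Y₂ = (X₁+X₃)/2`, and with `Z₁`, `Z₃`, `W₂` the unique solutions
of their diamond relations (cross ratio `-1`), one has
`W₂ = ((X₁+X₃)² − 4Y₀Y₄) / (4(X₁+X₃−Y₀−Y₄))`. -/
theorem frieze_explicit_formula
    (X₁ X₃ Y₀ Y₂ Y₄ Z₁ Z₃ W₂ : ℝ)
    (hY₂ : Y₂ = (X₁ + X₃) / 2)
    (hZ₁ : (X₁ - Y₀) * (Z₁ - Y₂) = -((Y₀ - Z₁) * (Y₂ - X₁)) ∧
      ∀ z : ℝ, (X₁ - Y₀) * (z - Y₂) = -((Y₀ - z) * (Y₂ - X₁)) → z = Z₁)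
    (hZ₃ : (X₃ - Y₂) * (Z₃ - Y₄) = -((Y₂ - Z₃) * (Y₄ - X₃)) ∧
      ∀ z : ℝ, (X₃ - Y₂) * (z - Y₄) = -((Y₂ - z) * (Y₄ - X₃)) → z = Z₃)
    (hW₂ : (Y₂ - Z₁) * (W₂ - Z₃) = -((Z₁ - W₂) * (Z₃ - Y₂)) ∧
      ∀ z : ℝ, (Y₂ - Z₁) * (z - Z₃) = -((Z₁ - z) * (Z₃ - Y₂)) → z = W₂)
    (h : X₁ + X₃ - Y₀ - Y₄ ≠ 0) :
    W₂ = ((X₁ + X₃) ^ 2 - 4 * Y₀ * Y₄) / (4 * (X₁ + X₃ - Y₀ - Y₄)) := by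
  obtain ⟨d1, e1⟩ := frieze_aux X₁ Y₀ Y₂ Z₁ hZ₁.1 hZ₁.2
  obtain ⟨d3, e3⟩ := frieze_aux X₃ Y₂ Y₄ Z₃ hZ₃.1 hZ₃.2
  obtain ⟨dW, eW⟩ := frieze_aux Y₂ Z₁ Z₃ W₂ hW₂.1 hW₂.2
  have hD : (4 : ℝ) * (X₁ + X₃ - Y₀ - Y₄) ≠ 0 := by
    intro h0; apply h; linarith
  rw [eq_div_iff hD]
  apply mul_left_cancel₀
    (mul_ne_zero dW (mul_ne_zero d1 d3))
  set D := (4 : ℝ) * (X₁ + X₃ - Y₀ - Y₄) with hDdefD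
  set N := (X₁ + X₃) ^ 2 - 4 * Y₀ * Y₄ with hNdef
  subst hY₂
  linear_combination (D * (2*X₁ - Y₀ - (X₁+X₃)/2) * (2*X₃ - (X₁+X₃)/2 - Y₄)) * eW
    + (D * ((X₁+X₃)/2) * (2*X₃ - (X₁+X₃)/2 - Y₄)
        - 2 * D * (Z₃ * (2*X₃ - (X₁+X₃)/2 - Y₄)) + N * (2*X₃ - (X₁+X₃)/2 - Y₄)) * e1
    + (D * ((X₁+X₃)/2) * (2*X₁ - Y₀ - (X₁+X₃)/2)
        - 2 * D * (X₁*((X₁+X₃)/2) + X₁*Y₀ - 2*Y₀*((X₁+X₃)/2)) + N * (2*X₁ - Y₀ - (X₁+X₃)/2)) * e3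
end
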